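/- Let A ∈ C¹(ℝ³, ℝ³) be a vector potential of medium range such that |∂_i A_k(x)| ≤ C(1+|x|)^{−μ̃} for all i, k with some μ̃ > 1, and set B := curl A (a continuous field). Let ω, ω̃ ∈ S² be unit vectors and x ∈ ℝ³, and assume the improper integrals a(ω,y) := lim_{T→∞} ∫_{−T}^{T} ω·A(y+ω·t) dt exist for all y. Then the function u ↦ a(ω, x + ω̃·u) is differentiable and (d/du) ∫_{−∞}^∞ ω·A(x + ω̃·u + ω·t) dt = ∫_{−∞}^∞ (ω̃ × ω)·B(x + ω̃·u + ω·t) dt, where the right-hand integrand is absolutely integrable. -/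

import Mathlib

open MeasureTheory Filter Topology
open scoped ENNReal

noncomputable section

abbrev E3 := EuclideanSpace ℝ (Fin 3)

/-- Euclidean dot product on `ℝ³`. -/
def dot3 (a b : E3) : ℝ := @inner ℝ _ _ a b

/-- Cross product on `ℝ³`. -/
def cross3 (a b : E3) : E3 :=
  WithLp.toLp 2 ![a 1 * b 2 - a 2 * b 1, a 2 * b 0 - a 0 * b 2, a 0 * b 1 - a 1 * b 0]

/-- `∂ᵢ fₖ (x)` for a map `f : ℝ³ → ℝ³`. -/
def pderiv3 (f : E3 → E3) (i k : Fin 3) (x : E3) : ℝ :=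
  fderiv ℝ f x (EuclideanSpace.single i 1) k

/-- Pointwise (classical) curl of a map `ℝ³ → ℝ³`. -/
def curl3 (f : E3 → E3) (x : E3) : E3 :=
  WithLp.toLp 2 ![pderiv3 f 1 2 x - pderiv3 f 2 1 x,
    pderiv3 f 2 0 x - pderiv3 f 0 2 x,
    pderiv3 f 0 1 x - pderiv3 f 1 0 x]

/-- The longitudinal component of `A` decays integrably:
`∫₀^∞ sup { |A(x)·x|/|x| : |x| ≥ r } dr < ∞`. -/
def LongitudinalIntegrableDecay (A : E3 → E3) : Prop :=
  (∫⁻ r in Set.Ioi (0:ℝ),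
    ⨆ x ∈ {x : E3 | r ≤ ‖x‖}, ENNReal.ofReal (|dot3 (A x) x| / ‖x‖)) < ⊤

/-- A vector potential of medium range. -/
def IsMediumRange (A : E3 → E3) : Prop :=
  Continuous A ∧
  (∃ C > (0:ℝ), ∃ μ : ℝ, 1/2 < μ ∧ ∃ R : ℝ, ∀ x : E3, R ≤ ‖x‖ → ‖A x‖ ≤ C * ‖x‖ ^ (-μ)) ∧
  LongitudinalIntegrableDecay A

/-- `div B = 0` in the sense of tempered distributions. -/
def DivFreeS' (B : E3 → E3) : Prop :=
  ∀ φ : SchwartzMap E3 ℝ, ∫ x, fderiv ℝ (⇑φ) x (B x) = 0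

/-- A magnetic field of medium decay on `ℝ³`. -/
def IsMediumDecay (B : E3 → E3) : Prop :=
  (∃ p : ℝ, 3 < p ∧ MemLp B (ENNReal.ofReal p) volume) ∧
  (∃ C > (0:ℝ), ∃ μ : ℝ, 3/2 < μ ∧ ∃ R : ℝ, ∀ x : E3, R ≤ ‖x‖ → ‖B x‖ ≤ C * ‖x‖ ^ (-μ)) ∧
  DivFreeS' B

/-- `curl A = B` in the sense of tempered distributions. -/
def CurlEqS' (A B : E3 → E3) : Prop :=
  ∀ φ : SchwartzMap E3 E3, (∫ x, dot3 (A x) (curl3 (⇑φ) x)) = ∫ x, dot3 (B x) (φ x)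


/-! ### Auxiliary lemmas -/

lemma dot3_eq (a b : E3) : dot3 a b = a 0 * b 0 + a 1 * b 1 + a 2 * b 2 := by
  simp [dot3, PiLp.inner_apply, RCLike.inner_apply, conj_trivial, Fin.sum_univ_three]
  ring

lemma abs_dot3_le_norm (a b : E3) : |dot3 a b| ≤ ‖a‖ * ‖b‖ := abs_real_inner_le_norm a b

lemma e3_decomp (y : E3) :
    y = y 0 • EuclideanSpace.single (0:Fin 3) (1:ℝ) + y 1 • EuclideanSpace.single 1 1
      + y 2 • EuclideanSpace.single 2 1 := by
  ext i
  fin_cases i <;>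
    simp [EuclideanSpace.single_apply, PiLp.add_apply, PiLp.smul_apply]

lemma clm_apply_decomp (L : E3 →L[ℝ] E3) (y : E3) (k : Fin 3) :
    L y k = y 0 * L (EuclideanSpace.single 0 1) k + y 1 * L (EuclideanSpace.single 1 1) k
      + y 2 * L (EuclideanSpace.single 2 1) k := by
  conv_lhs => rw [e3_decomp y]
  rw [map_add, map_add, _root_.map_smul, _root_.map_smul, _root_.map_smul]
  simp [PiLp.add_apply, PiLp.smul_apply, smul_eq_mul]

lemma key_alg (A : E3 → E3) (p : E3) (ω ωt : E3) :
    dot3 ω (fderiv ℝ A p ωt)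
      = dot3 (cross3 ωt ω) (curl3 A p) + dot3 ωt (fderiv ℝ A p ω) := by
  rw [dot3_eq, dot3_eq, dot3_eq, clm_apply_decomp (fderiv ℝ A p) ωt 0,
    clm_apply_decomp (fderiv ℝ A p) ωt 1, clm_apply_decomp (fderiv ℝ A p) ωt 2,
    clm_apply_decomp (fderiv ℝ A p) ω 0, clm_apply_decomp (fderiv ℝ A p) ω 1,
    clm_apply_decomp (fderiv ℝ A p) ω 2]
  simp only [cross3, curl3, pderiv3, PiLp.toLp_apply, Matrix.cons_val_zero, Matrix.cons_val_one,
    Matrix.head_cons, Matrix.cons_val_two, Matrix.tail_cons]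
  ring

lemma hasDerivAt_dot3_comp (A : E3 → E3) (hA : Differentiable ℝ A) (c w y : E3) (v : ℝ) :
    HasDerivAt (fun v : ℝ => dot3 c (A (y + v • w))) (dot3 c (fderiv ℝ A (y + v • w) w)) v := by
  have h1 : HasDerivAt (fun v : ℝ => y + v • w) w v := by
    simpa using ((hasDerivAt_id v).smul_const w).const_add y
  have h2 := ((hA (y + v • w)).hasFDerivAt).comp_hasDerivAt v h1
  have h3 := (innerSL ℝ c).hasFDerivAt.comp_hasDerivAt v h2
  simpa [dot3, Function.comp_def] using h3

lemma abs_dot3_le_of_forall (c v : E3) (M : ℝ) (h : ∀ i, |v i| ≤ M) :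
    |dot3 c v| ≤ (|c 0| + |c 1| + |c 2|) * M := by
  rw [dot3_eq]
  calc |c 0 * v 0 + c 1 * v 1 + c 2 * v 2|
      ≤ |c 0 * v 0 + c 1 * v 1| + |c 2 * v 2| := abs_add_le _ _
    _ ≤ (|c 0 * v 0| + |c 1 * v 1|) + |c 2 * v 2| := by gcongr; exact abs_add_le _ _
    _ = |c 0| * |v 0| + |c 1| * |v 1| + |c 2| * |v 2| := by rw [abs_mul, abs_mul, abs_mul]
    _ ≤ |c 0| * M + |c 1| * M + |c 2| * M :=
        add_le_add (add_le_add (mul_le_mul_of_nonneg_left (h 0) (abs_nonneg _))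
          (mul_le_mul_of_nonneg_left (h 1) (abs_nonneg _)))
          (mul_le_mul_of_nonneg_left (h 2) (abs_nonneg _))
    _ = (|c 0| + |c 1| + |c 2|) * M := by ring

lemma pderiv3_continuous (A : E3 → E3) (hA : ContDiff ℝ 1 A) (i k : Fin 3) :
    Continuous fun p => pderiv3 A i k p :=
  (continuous_apply k).comp ((PiLp.continuous_ofLp 2 _).comp
    ((hA.continuous_fderiv one_ne_zero).clm_apply continuous_const))

lemma curl3_continuous (A : E3 → E3) (hA : ContDiff ℝ 1 A) : Continuous (curl3 A) := by
  unfold curl3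
  apply (PiLp.continuous_toLp 2 _).comp
  apply continuous_pi
  intro i
  fin_cases i <;>
    exact ((pderiv3_continuous A hA _ _).sub (pderiv3_continuous A hA _ _))

lemma dot3_continuous_comp (c : E3) {α : Type*} [TopologicalSpace α] {g : α → E3}
    (hg : Continuous g) : Continuous fun t => dot3 c (g t) :=
  continuous_const.inner hg

lemma rpow_decay_bound (μ' c t : ℝ) (hμ' : 0 < μ') (hc : 0 ≤ c) (p : E3)
    (hp : |t| - c ≤ ‖p‖) :
    (1 + ‖p‖) ^ (-μ') ≤ (1 + c) ^ μ' * (1 + |t|) ^ (-μ') := by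
  have h1 : (0:ℝ) < 1 + |t| := by positivity
  have h2 : (0:ℝ) < 1 + c := by positivity
  have h3 : (0:ℝ) < 1 + ‖p‖ := by positivity
  have hmul : 1 + |t| ≤ (1 + ‖p‖) * (1 + c) := by nlinarith [norm_nonneg p]
  have h4 := Real.rpow_le_rpow_of_nonpos h1 hmul (by linarith : -μ' ≤ 0)
  rw [Real.mul_rpow h3.le h2.le] at h4
  have h5 : (1 + c) ^ (-μ') * (1 + c) ^ μ' = 1 := by
    rw [← Real.rpow_add h2]; simp
  calc (1 + ‖p‖) ^ (-μ') = (1 + ‖p‖) ^ (-μ') * ((1 + c) ^ (-μ') * (1 + c) ^ μ') := by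
        rw [h5, mul_one]
    _ = ((1 + ‖p‖) ^ (-μ') * (1 + c) ^ (-μ')) * (1 + c) ^ μ' := by ring
    _ ≤ (1 + |t|) ^ (-μ') * (1 + c) ^ μ' :=
        mul_le_mul_of_nonneg_right h4 (Real.rpow_nonneg h2.le _)
    _ = (1 + c) ^ μ' * (1 + |t|) ^ (-μ') := by ring

lemma integrable_decay (μ' : ℝ) (hμ' : 1 < μ') :
    Integrable (fun t : ℝ => (1 + |t|) ^ (-μ')) volume := by
  have h := integrable_one_add_norm (E := ℝ) (μ := volume) (r := μ') (by simpa using hμ')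
  simpa [Real.norm_eq_abs] using h

set_option maxHeartbeats 1600000

/-- Differentiating the X-ray transform of `A` yields the X-ray transform of the
normal component of `B = curl A` (equation (x2)). -/
theorem statement16 (A : E3 → E3) (hA1 : ContDiff ℝ 1 A) (hAmr : IsMediumRange A)
    (C μ' : ℝ) (hμ' : 1 < μ')
    (hder : ∀ i k : Fin 3, ∀ x : E3, |pderiv3 A i k x| ≤ C * (1 + ‖x‖) ^ (-μ'))
    (ω ωt : E3) (hω : ‖ω‖ = 1) (hωt : ‖ωt‖ = 1) (x : E3)
    (a : E3 → ℝ)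
    (ha : ∀ y : E3,
      Tendsto (fun T : ℝ => ∫ t in -T..T, dot3 ω (A (y + t • ω))) atTop (𝓝 (a y))) :
    ∀ u : ℝ,
      Integrable
        (fun t : ℝ => dot3 (cross3 ωt ω) (curl3 A (x + u • ωt + t • ω))) volume ∧
      HasDerivAt (fun v : ℝ => a (x + v • ωt))
        (∫ t : ℝ, dot3 (cross3 ωt ω) (curl3 A (x + u • ωt + t • ω))) u := by
  intro u
  obtain ⟨hAcont, ⟨CA, hCA0, μA, hμA, RA, hRA⟩, -⟩ := hAmr
  have hμ'0 : (0:ℝ) < μ' := by linarith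
  have hC0 : (0:ℝ) ≤ C := by
    have h2 := (abs_nonneg (pderiv3 A 0 0 0)).trans (hder 0 0 0)
    simpa using h2
  have Adiff : Differentiable ℝ A := hA1.differentiable one_ne_zero
  set c : ℝ := ‖x‖ + |u| + 1 with hc_def
  have hc0 : (0:ℝ) ≤ c := by positivity
  -- componentwise bound on the curl
  have habs2 : ∀ a b M : ℝ, |a| ≤ M → |b| ≤ M → |a - b| ≤ 2 * M := by
    intro a b M h1 h2
    calc |a - b| ≤ |a| + |b| := abs_sub _ _
      _ ≤ 2 * M := by linarith
  have hcurlb : ∀ (p : E3) (i : Fin 3), |curl3 A p i| ≤ 2 * (C * (1 + ‖p‖) ^ (-μ')) := by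
    intro p i
    fin_cases i <;> exact habs2 _ _ _ (hder _ _ p) (hder _ _ p)
  -- componentwise bound on fderiv applications
  have hfdb : ∀ (w p : E3) (k : Fin 3),
      |fderiv ℝ A p w k| ≤ (|w 0| + |w 1| + |w 2|) * (C * (1 + ‖p‖) ^ (-μ')) := by
    intro w p k
    rw [clm_apply_decomp]
    have h0 : ∀ i : Fin 3, |fderiv ℝ A p (EuclideanSpace.single i 1) k| ≤ C * (1 + ‖p‖) ^ (-μ') :=
      fun i => hder i k p
    calc |w 0 * fderiv ℝ A p (EuclideanSpace.single 0 1) k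
          + w 1 * fderiv ℝ A p (EuclideanSpace.single 1 1) k
          + w 2 * fderiv ℝ A p (EuclideanSpace.single 2 1) k|
        ≤ |w 0 * fderiv ℝ A p (EuclideanSpace.single 0 1) k
          + w 1 * fderiv ℝ A p (EuclideanSpace.single 1 1) k|
          + |w 2 * fderiv ℝ A p (EuclideanSpace.single 2 1) k| := abs_add_le _ _
      _ ≤ (|w 0 * fderiv ℝ A p (EuclideanSpace.single 0 1) k|
          + |w 1 * fderiv ℝ A p (EuclideanSpace.single 1 1) k|)
          + |w 2 * fderiv ℝ A p (EuclideanSpace.single 2 1) k| := by gcongr; exact abs_add_le _ _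
      _ = |w 0| * |fderiv ℝ A p (EuclideanSpace.single 0 1) k|
          + |w 1| * |fderiv ℝ A p (EuclideanSpace.single 1 1) k|
          + |w 2| * |fderiv ℝ A p (EuclideanSpace.single 2 1) k| := by
            rw [abs_mul, abs_mul, abs_mul]
      _ ≤ |w 0| * (C * (1 + ‖p‖) ^ (-μ')) + |w 1| * (C * (1 + ‖p‖) ^ (-μ'))
          + |w 2| * (C * (1 + ‖p‖) ^ (-μ')) :=
            add_le_add (add_le_add (mul_le_mul_of_nonneg_left (h0 0) (abs_nonneg _))
              (mul_le_mul_of_nonneg_left (h0 1) (abs_nonneg _)))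
              (mul_le_mul_of_nonneg_left (h0 2) (abs_nonneg _))
      _ = (|w 0| + |w 1| + |w 2|) * (C * (1 + ‖p‖) ^ (-μ')) := by ring
  have hdot_fd : ∀ (cv w p : E3),
      |dot3 cv (fderiv ℝ A p w)|
        ≤ (|cv 0| + |cv 1| + |cv 2|) * ((|w 0| + |w 1| + |w 2|) * (C * (1 + ‖p‖) ^ (-μ'))) :=
    fun cv w p => abs_dot3_le_of_forall _ _ _ (fun k => hfdb w p k)
  have hP1 : ∀ p : E3, (1 + ‖p‖) ^ (-μ') ≤ 1 := fun p =>
    Real.rpow_le_one_of_one_le_of_nonpos (by linarith [norm_nonneg p]) (by linarith)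
  set Scw : ℝ := |cross3 ωt ω 0| + |cross3 ωt ω 1| + |cross3 ωt ω 2| with hScw_def
  have hScw0 : (0:ℝ) ≤ Scw := by positivity
  have hKb : ∀ (v t : ℝ),
      |dot3 (cross3 ωt ω) (curl3 A (x + v • ωt + t • ω))|
        ≤ Scw * (2 * (C * (1 + ‖x + v • ωt + t • ω‖) ^ (-μ'))) :=
    fun v t => abs_dot3_le_of_forall _ _ _ (fun i => hcurlb _ i)
  -- lower bound for the norm along the line
  have hnorm_lb : ∀ (v t : ℝ), |t| - ‖x + v • ωt‖ ≤ ‖x + v • ωt + t • ω‖ := by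
    intro v t
    have h1 : ‖t • ω‖ ≤ ‖x + v • ωt + t • ω‖ + ‖x + v • ωt‖ := by
      calc ‖t • ω‖ = ‖(x + v • ωt + t • ω) - (x + v • ωt)‖ := congrArg norm (by abel)
        _ ≤ ‖x + v • ωt + t • ω‖ + ‖x + v • ωt‖ := norm_sub_le _ _
    have h2 : ‖t • ω‖ = |t| := by rw [norm_smul, hω, Real.norm_eq_abs, mul_one]
    linarith
  have hxvc : ∀ v ∈ Metric.ball u 1, ‖x + v • ωt‖ ≤ c := by
    intro v hv
    have hvu : |v - u| < 1 := by simpa [Real.dist_eq] using hv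
    have hvabs : |v| ≤ |u| + |v - u| := by
      have : v = u + (v - u) := by ring
      calc |v| = |u + (v - u)| := by rw [← this]
        _ ≤ |u| + |v - u| := abs_add_le _ _
    calc ‖x + v • ωt‖ ≤ ‖x‖ + ‖v • ωt‖ := norm_add_le _ _
      _ = ‖x‖ + |v| := by rw [norm_smul, hωt, Real.norm_eq_abs, mul_one]
      _ ≤ c := by rw [hc_def]; linarith
  have huc : ‖x + u • ωt‖ ≤ c := by
    calc ‖x + u • ωt‖ ≤ ‖x‖ + ‖u • ωt‖ := norm_add_le _ _
      _ = ‖x‖ + |u| := by rw [norm_smul, hωt, Real.norm_eq_abs, mul_one]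
      _ ≤ c := by rw [hc_def]; linarith
  -- the dominating function
  set D : ℝ := Scw * (2 * C) * (1 + c) ^ μ' with hD_def
  have hbnd_int : Integrable (fun t : ℝ => D * (1 + |t|) ^ (-μ')) volume :=
    (integrable_decay μ' hμ').const_mul D
  have hKle : ∀ (v t : ℝ), ‖x + v • ωt‖ ≤ c →
      |dot3 (cross3 ωt ω) (curl3 A (x + v • ωt + t • ω))| ≤ D * (1 + |t|) ^ (-μ') := by
    intro v t hvc
    have h2 : (1 + ‖x + v • ωt + t • ω‖) ^ (-μ') ≤ (1 + c) ^ μ' * (1 + |t|) ^ (-μ') :=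
      rpow_decay_bound μ' c t hμ'0 hc0 _ (by have := hnorm_lb v t; linarith)
    calc |dot3 (cross3 ωt ω) (curl3 A (x + v • ωt + t • ω))|
        ≤ Scw * (2 * (C * (1 + ‖x + v • ωt + t • ω‖) ^ (-μ'))) := hKb v t
      _ ≤ Scw * (2 * (C * ((1 + c) ^ μ' * (1 + |t|) ^ (-μ')))) := by
          apply mul_le_mul_of_nonneg_left _ hScw0
          apply mul_le_mul_of_nonneg_left _ (by norm_num : (0:ℝ) ≤ 2)
          exact mul_le_mul_of_nonneg_left h2 hC0
      _ = D * (1 + |t|) ^ (-μ') := by rw [hD_def]; ring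
  -- continuity facts
  have hfd_cont : Continuous fun p : E3 => fderiv ℝ A p := hA1.continuous_fderiv one_ne_zero
  have hline : ∀ v : ℝ, Continuous fun t : ℝ => x + v • ωt + t • ω := fun v =>
    continuous_const.add (continuous_id.smul continuous_const)
  have hKcont : ∀ v : ℝ,
      Continuous fun t : ℝ => dot3 (cross3 ωt ω) (curl3 A (x + v • ωt + t • ω)) := fun v =>
    dot3_continuous_comp _ ((curl3_continuous A hA1).comp (hline v))
  have hFcont : ∀ v : ℝ, Continuous fun t : ℝ => dot3 ω (A (x + v • ωt + t • ω)) := fun v =>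
    dot3_continuous_comp _ (hAcont.comp (hline v))
  have hdFcont : ∀ v : ℝ,
      Continuous fun t : ℝ => dot3 ω (fderiv ℝ A (x + v • ωt + t • ω) ωt) := fun v =>
    dot3_continuous_comp _ ((hfd_cont.comp (hline v)).clm_apply continuous_const)
  have hdHcont : ∀ v : ℝ,
      Continuous fun t : ℝ => dot3 ωt (fderiv ℝ A (x + v • ωt + t • ω) ω) := fun v =>
    dot3_continuous_comp _ ((hfd_cont.comp (hline v)).clm_apply continuous_const)
  -- integrability of the transverse curl component
  have hKint : ∀ v : ℝ, ‖x + v • ωt‖ ≤ c →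
      Integrable (fun t : ℝ => dot3 (cross3 ωt ω) (curl3 A (x + v • ωt + t • ω))) volume := by
    intro v hvc
    refine hbnd_int.mono' (hKcont v).aestronglyMeasurable ?_
    exact ae_of_all _ fun t => by rw [Real.norm_eq_abs]; exact hKle v t hvc
  refine ⟨hKint u huc, ?_⟩
  -- derivative in the v-direction
  have hFv : ∀ (t v : ℝ), HasDerivAt (fun w : ℝ => dot3 ω (A (x + w • ωt + t • ω)))
      (dot3 ω (fderiv ℝ A (x + v • ωt + t • ω) ωt)) v := by
    intro t v
    have h := hasDerivAt_dot3_comp A Adiff ω ωt (x + t • ω) v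
    have he : ∀ w : ℝ, x + t • ω + w • ωt = x + w • ωt + t • ω := fun w => by abel
    simpa only [he] using h
  have hHt : ∀ (v t : ℝ), HasDerivAt (fun r : ℝ => dot3 ωt (A (x + v • ωt + r • ω)))
      (dot3 ωt (fderiv ℝ A (x + v • ωt + t • ω) ω)) t := fun v t =>
    hasDerivAt_dot3_comp A Adiff ωt ω (x + v • ωt) t
  -- global bound on the v-derivative
  set Cb : ℝ := (|ω 0| + |ω 1| + |ω 2|) * ((|ωt 0| + |ωt 1| + |ωt 2|) * C) with hCb_def
  have hdFb : ∀ (w t : ℝ), |dot3 ω (fderiv ℝ A (x + w • ωt + t • ω) ωt)| ≤ Cb := by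
    intro w t
    have h := hdot_fd ω ωt (x + w • ωt + t • ω)
    have h1 : C * (1 + ‖x + w • ωt + t • ω‖) ^ (-μ') ≤ C * 1 :=
      mul_le_mul_of_nonneg_left (hP1 _) hC0
    have h2 : (|ωt 0| + |ωt 1| + |ωt 2|) * (C * (1 + ‖x + w • ωt + t • ω‖) ^ (-μ'))
        ≤ (|ωt 0| + |ωt 1| + |ωt 2|) * C := by
      rw [mul_one] at h1
      exact mul_le_mul_of_nonneg_left h1 (by positivity)
    calc |dot3 ω (fderiv ℝ A (x + w • ωt + t • ω) ωt)|
        ≤ (|ω 0| + |ω 1| + |ω 2|)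
            * ((|ωt 0| + |ωt 1| + |ωt 2|) * (C * (1 + ‖x + w • ωt + t • ω‖) ^ (-μ'))) := h
      _ ≤ Cb := by rw [hCb_def]; exact mul_le_mul_of_nonneg_left h2 (by positivity)
  -- approximants and their derivatives
  have hderivT : ∀ T : ℝ, ∀ v ∈ Metric.ball u 1,
      HasDerivAt (fun w : ℝ => ∫ t in (-T)..T, dot3 ω (A (x + w • ωt + t • ω)))
        (∫ t in (-T)..T, dot3 ω (fderiv ℝ A (x + v • ωt + t • ω) ωt)) v := by
    intro T v hv
    have h := intervalIntegral.hasDerivAt_integral_of_dominated_loc_of_deriv_le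
      (F := fun w t => dot3 ω (A (x + w • ωt + t • ω)))
      (F' := fun w t => dot3 ω (fderiv ℝ A (x + w • ωt + t • ω) ωt))
      (x₀ := v) (a := -T) (b := T) (μ := volume) (bound := fun _ => Cb)
      (Metric.ball_mem_nhds v one_pos)
      (Eventually.of_forall fun w => ((hFcont w).aestronglyMeasurable).restrict)
      ((hFcont v).intervalIntegrable _ _)
      ((hdFcont v).aestronglyMeasurable.restrict)
      (ae_of_all _ fun t _ w _ => by rw [Real.norm_eq_abs]; exact hdFb w t)
      (intervalIntegrable_const)
      (ae_of_all _ fun t _ w _ => hFv t w)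
    exact h.2
  -- splitting of the derivative integral
  have hsplit : ∀ T v : ℝ, (∫ t in (-T)..T, dot3 ω (fderiv ℝ A (x + v • ωt + t • ω) ωt))
      = (∫ t in (-T)..T, dot3 (cross3 ωt ω) (curl3 A (x + v • ωt + t • ω)))
        + (dot3 ωt (A (x + v • ωt + T • ω)) - dot3 ωt (A (x + v • ωt + (-T) • ω))) := by
    intro T v
    have h1 : (∫ t in (-T)..T, dot3 ω (fderiv ℝ A (x + v • ωt + t • ω) ωt))
        = ∫ t in (-T)..T,
        (dot3 (cross3 ωt ω) (curl3 A (x + v • ωt + t • ω))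
          + dot3 ωt (fderiv ℝ A (x + v • ωt + t • ω) ω)) := by
      exact intervalIntegral.integral_congr fun t _ => key_alg A _ ω ωt
    rw [h1, intervalIntegral.integral_add ((hKcont v).intervalIntegrable _ _)
      ((hdHcont v).intervalIntegrable _ _)]
    congr 1
    exact intervalIntegral.integral_eq_sub_of_hasDerivAt (fun t _ => hHt v t)
      ((hdHcont v).intervalIntegrable _ _)
  -- convergence to zero of the error terms
  have hbT : Tendsto (fun T : ℝ => ∫ t in (-T)..T, D * (1 + |t|) ^ (-μ')) atTop
      (𝓝 (∫ t : ℝ, D * (1 + |t|) ^ (-μ'))) :=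
    intervalIntegral_tendsto_integral hbnd_int tendsto_neg_atTop_atBot tendsto_id
  have hbdT : Tendsto (fun T : ℝ => 2 * (CA * (T - c) ^ (-μA))) atTop (𝓝 0) := by
    have h := (tendsto_rpow_neg_atTop (by linarith : (0:ℝ) < μA)).comp
      (tendsto_atTop_add_const_right atTop (-c) tendsto_id)
    have h2 := h.const_mul (2 * CA)
    simpa [Function.comp, sub_eq_add_neg, mul_assoc] using h2
  have hδ : Tendsto (fun T : ℝ =>
      ((∫ t : ℝ, D * (1 + |t|) ^ (-μ')) - ∫ t in (-T)..T, D * (1 + |t|) ^ (-μ'))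
        + 2 * (CA * (T - c) ^ (-μA))) atTop (𝓝 0) := by
    have h1 := hbT.const_sub (∫ t : ℝ, D * (1 + |t|) ^ (-μ'))
    simpa using h1.add hbdT
  -- tail estimate
  have htail : ∀ T : ℝ, 0 ≤ T → ∀ v : ℝ, ‖x + v • ωt‖ ≤ c →
      |(∫ t : ℝ, dot3 (cross3 ωt ω) (curl3 A (x + v • ωt + t • ω)))
          - ∫ t in (-T)..T, dot3 (cross3 ωt ω) (curl3 A (x + v • ωt + t • ω))|
        ≤ (∫ t : ℝ, D * (1 + |t|) ^ (-μ')) - ∫ t in (-T)..T, D * (1 + |t|) ^ (-μ') := by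
    intro T hT v hvc
    have hTle : -T ≤ T := by linarith
    rw [intervalIntegral.integral_of_le hTle, intervalIntegral.integral_of_le hTle]
    have hKi := hKint v hvc
    have hs1 := integral_add_compl (s := Set.Ioc (-T) T) (μ := volume) measurableSet_Ioc hKi
    have hs2 := integral_add_compl (s := Set.Ioc (-T) T) (μ := volume) measurableSet_Ioc hbnd_int
    have h2 : |∫ t in (Set.Ioc (-T) T)ᶜ, dot3 (cross3 ωt ω) (curl3 A (x + v • ωt + t • ω))|
        ≤ ∫ t in (Set.Ioc (-T) T)ᶜ, D * (1 + |t|) ^ (-μ') := by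
      rw [← Real.norm_eq_abs]
      refine norm_integral_le_of_norm_le (hbnd_int.integrableOn) (ae_of_all _ fun t => ?_)
      rw [Real.norm_eq_abs]; exact hKle v t hvc
    have heq : (∫ t : ℝ, dot3 (cross3 ωt ω) (curl3 A (x + v • ωt + t • ω)))
        - (∫ t in Set.Ioc (-T) T, dot3 (cross3 ωt ω) (curl3 A (x + v • ωt + t • ω)))
        = ∫ t in (Set.Ioc (-T) T)ᶜ, dot3 (cross3 ωt ω) (curl3 A (x + v • ωt + t • ω)) := by
      linarith [hs1]
    have heq2 : (∫ t : ℝ, D * (1 + |t|) ^ (-μ'))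
        - (∫ t in Set.Ioc (-T) T, D * (1 + |t|) ^ (-μ'))
        = ∫ t in (Set.Ioc (-T) T)ᶜ, D * (1 + |t|) ^ (-μ') := by
      linarith [hs2]
    rw [heq, heq2]
    exact h2
  -- boundary estimate
  have hbdry : ∀ T : ℝ, c + max RA 0 + 1 ≤ T → ∀ v : ℝ, ‖x + v • ωt‖ ≤ c → ∀ r : ℝ, T ≤ |r| →
      |dot3 ωt (A (x + v • ωt + r • ω))| ≤ CA * (T - c) ^ (-μA) := by
    intro T hTc v hvc r hr
    have hn := hnorm_lb v r
    have hq1 : T - c ≤ ‖x + v • ωt + r • ω‖ := by linarith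
    have hmax := le_max_left RA (0:ℝ)
    have hmax0 := le_max_right RA (0:ℝ)
    have hq2 : RA ≤ ‖x + v • ωt + r • ω‖ := by linarith
    have hTcpos : (0:ℝ) < T - c := by linarith
    have hA' := hRA _ hq2
    have h2 : ‖x + v • ωt + r • ω‖ ^ (-μA) ≤ (T - c) ^ (-μA) :=
      Real.rpow_le_rpow_of_nonpos hTcpos hq1 (by linarith : -μA ≤ 0)
    calc |dot3 ωt (A (x + v • ωt + r • ω))|
        ≤ ‖ωt‖ * ‖A (x + v • ωt + r • ω)‖ := abs_dot3_le_norm _ _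
      _ = ‖A (x + v • ωt + r • ω)‖ := by rw [hωt, one_mul]
      _ ≤ CA * ‖x + v • ωt + r • ω‖ ^ (-μA) := hA'
      _ ≤ CA * (T - c) ^ (-μA) := mul_le_mul_of_nonneg_left h2 hCA0.le
  -- uniform convergence of the derivatives
  have absarith : ∀ p q r s : ℝ, |p - (q + (r - s))| ≤ |p - q| + (|r| + |s|) := by
    intro p q r s
    have h4 : p - (q + (r - s)) = (p - q) + (s - r) := by ring
    rw [h4]
    calc |(p - q) + (s - r)| ≤ |p - q| + |s - r| := abs_add_le _ _
      _ ≤ |p - q| + (|s| + |r|) := by linarith [abs_sub s r]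
      _ = |p - q| + (|r| + |s|) := by ring
  have hunif : TendstoUniformlyOn
      (fun (T : ℝ) (v : ℝ) => ∫ t in (-T)..T, dot3 ω (fderiv ℝ A (x + v • ωt + t • ω) ωt))
      (fun v => ∫ t : ℝ, dot3 (cross3 ωt ω) (curl3 A (x + v • ωt + t • ω)))
      atTop (Metric.ball u 1) := by
    rw [Metric.tendstoUniformlyOn_iff]
    intro ε hε
    filter_upwards [hδ.eventually_lt_const hε,
      eventually_ge_atTop (max 0 (c + max RA 0 + 1))] with T h1 h2 v hv
    have hT0 : (0:ℝ) ≤ T := le_trans (le_max_left _ _) h2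
    have hTc : c + max RA 0 + 1 ≤ T := le_trans (le_max_right _ _) h2
    have hvc := hxvc v hv
    have e1 := htail T hT0 v hvc
    have e2 := hbdry T hTc v hvc T (by rw [abs_of_nonneg hT0])
    have e3 := hbdry T hTc v hvc (-T) (by rw [abs_neg, abs_of_nonneg hT0])
    have final := absarith (∫ t : ℝ, dot3 (cross3 ωt ω) (curl3 A (x + v • ωt + t • ω)))
      (∫ t in (-T)..T, dot3 (cross3 ωt ω) (curl3 A (x + v • ωt + t • ω)))
      (dot3 ωt (A (x + v • ωt + T • ω))) (dot3 ωt (A (x + v • ωt + (-T) • ω)))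
    simp only [Real.dist_eq]
    rw [hsplit T v]
    linarith [final, e1, e2, e3]
  exact hasDerivAt_of_tendstoUniformlyOn Metric.isOpen_ball hunif
    (Eventually.of_forall hderivT) (fun v _ => ha (x + v • ωt)) (Metric.mem_ball_self one_pos)
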